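/- Fix ε with 0 ≤ ε < 1 and a player i. Let x* be a feasible allocation maximizing Π_k v_k(x_k)^{b_k} and x*_{-i} a feasible allocation maximizing Π_{k≠i} v_k(x_k)^{b_k}; assume each v_k is concave, all the values v_k(x*_k), v_k((x*_{-i})_k) (k ≠ i) are positive, and v_i(0) = 0. Let x̃ be any feasible allocation with Π_k v_k(x̃_k)^{b_k} ≥ (1−ε)·Π_k v_k(x*_k)^{b_k}, and let x̃_{-i} be any feasible allocation with Π_{k≠i} v_k((x̃_{-i})_k)^{b_k} > 0, and define f̃_i = min{1, (Π_{k≠i} v_k(x̃_k)^{b_k} / Π_{k≠i} v_k((x̃_{-i})_k)^{b_k})^{1/b_i}}. Then, with B_{-i} = Σ_{k≠i} b_k, the adapted Partial Allocation mechanism guarantees f̃_i·v_i(x̃_i) ≥ (1−ε)·(1 + b_i/B_{-i})^{-B_{-i}/b_i}·v_i(x*_i). -/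

import Mathlib

open Finset

lemma aux_log_lb {u : ℝ} (hu : -(1/2:ℝ) ≤ u) : u - 2*u^2 ≤ Real.log (1+u) := by
  have h1 : (0:ℝ) < 1 + u := by linarith
  have h2 : Real.log (1+u)⁻¹ ≤ (1+u)⁻¹ - 1 := Real.log_le_sub_one_of_pos (by positivity)
  rw [Real.log_inv] at h2
  have h3 : u / (1+u) ≤ Real.log (1+u) := by
    rw [div_le_iff₀ h1]
    have : 1 - (1+u)⁻¹ ≤ Real.log (1+u) := by linarith
    have h4 : (1 - (1+u)⁻¹) * (1+u) = u := by field_simp; ring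
    nlinarith [mul_le_mul_of_nonneg_right this h1.le]
  have h5 : u - 2*u^2 ≤ u / (1+u) := by
    rw [le_div_iff₀ h1]; nlinarith
  linarith

lemma aux_small_t {S M : ℝ} (hM : 0 ≤ M) (h : ∀ t : ℝ, 0 < t → t ≤ 1/2 → S ≤ t * M) : S ≤ 0 := by
  by_contra hS
  push_neg at hS
  have ht0 : 0 < min (1/2 : ℝ) (S / (2*(M+1))) := by
    apply lt_min (by norm_num); positivity
  have := h _ ht0 (min_le_left _ _)
  have h2 : min (1/2 : ℝ) (S / (2*(M+1))) * M ≤ (S / (2*(M+1))) * M :=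
    mul_le_mul_of_nonneg_right (min_le_right _ _) hM
  have h3 : (S / (2*(M+1))) * M < S := by
    rw [div_mul_eq_mul_div, div_lt_iff₀ (by linarith)]
    nlinarith
  linarith

lemma aux_kkt {α : Type*} (s : Finset α) (b p q : α → ℝ)
    (hb : ∀ k ∈ s, 0 < b k) (hp : ∀ k ∈ s, 0 < p k) (hq : ∀ k ∈ s, 0 ≤ q k)
    (h : ∀ t : ℝ, 0 < t → t ≤ 1/2 →
      ∏ k ∈ s, ((1-t) * p k + t * q k) ^ b k ≤ ∏ k ∈ s, p k ^ b k) :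
    ∑ k ∈ s, b k * (q k / p k) ≤ ∑ k ∈ s, b k := by
  set ρ : α → ℝ := fun k => q k / p k with hρ
  have hρ_nonneg : ∀ k ∈ s, 0 ≤ ρ k := fun k hk => div_nonneg (hq k hk) (hp k hk).le
  have key : ∀ t : ℝ, 0 < t → t ≤ 1/2 →
      ∑ k ∈ s, b k * (ρ k - 1) ≤ t * (2 * ∑ k ∈ s, b k * (ρ k - 1)^2) := by
    intro t ht0 ht1
    -- rewrite bases: (1-t) p + t q = p * (1 + t*(ρ-1))
    have hbase : ∀ k ∈ s, (1-t) * p k + t * q k = p k * (1 + t*(ρ k - 1)) := by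
      intro k hk
      have := (hp k hk).ne'
      field_simp [hρ]
      have e : p k * ρ k = q k := by rw [hρ]; field_simp
      linear_combination (-t) * e
    have hupos : ∀ k ∈ s, 0 < 1 + t*(ρ k - 1) := by
      intro k hk
      have : t * (ρ k - 1) ≥ t * (0 - 1) := by
        apply mul_le_mul_of_nonneg_left _ ht0.le
        have := hρ_nonneg k hk; linarith
      nlinarith
    have h1 : ∏ k ∈ s, (p k * (1 + t*(ρ k - 1))) ^ b k ≤ ∏ k ∈ s, p k ^ b k := by
      calc ∏ k ∈ s, (p k * (1 + t*(ρ k - 1))) ^ b k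
          = ∏ k ∈ s, ((1-t) * p k + t * q k) ^ b k :=
            Finset.prod_congr rfl (fun k hk => by rw [hbase k hk])
        _ ≤ _ := h t ht0 ht1
    have h2 : ∏ k ∈ s, (1 + t*(ρ k - 1)) ^ b k ≤ 1 := by
      have hsplit : ∀ k ∈ s, (p k * (1 + t*(ρ k - 1))) ^ b k
          = p k ^ b k * (1 + t*(ρ k - 1)) ^ b k := fun k hk =>
        Real.mul_rpow (hp k hk).le (hupos k hk).le
      rw [Finset.prod_congr rfl hsplit, Finset.prod_mul_distrib] at h1
      have hPpos : 0 < ∏ k ∈ s, p k ^ b k :=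
        Finset.prod_pos fun k hk => Real.rpow_pos_of_pos (hp k hk) _
      exact le_of_mul_le_mul_left (by simpa using h1) hPpos
    -- take logs
    have h3 : ∑ k ∈ s, b k * Real.log (1 + t*(ρ k - 1)) ≤ 0 := by
      have := Real.log_le_log (Finset.prod_pos fun k hk =>
        Real.rpow_pos_of_pos (hupos k hk) _) h2
      rw [Real.log_one, Real.log_prod (fun k hk =>
        (Real.rpow_pos_of_pos (hupos k hk) _).ne')] at this
      calc ∑ k ∈ s, b k * Real.log (1 + t*(ρ k - 1))
          = ∑ k ∈ s, Real.log ((1 + t*(ρ k - 1)) ^ b k) := by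
            refine Finset.sum_congr rfl fun k hk => ?_
            rw [Real.log_rpow (hupos k hk), mul_comm]
        _ ≤ 0 := this
    have h4 : ∑ k ∈ s, b k * (t*(ρ k - 1) - 2*(t*(ρ k - 1))^2) ≤ 0 := by
      refine le_trans (Finset.sum_le_sum fun k hk => ?_) h3
      apply mul_le_mul_of_nonneg_left _ (hb k hk).le
      apply aux_log_lb
      have h5 : -t ≤ t * (ρ k - 1) := by
        have := hρ_nonneg k hk; nlinarith
      linarith
    have hexp : ∑ k ∈ s, b k * (t*(ρ k - 1) - 2*(t*(ρ k - 1))^2)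
        = t * (∑ k ∈ s, b k * (ρ k - 1)) - t^2 * (2 * ∑ k ∈ s, b k * (ρ k - 1)^2) := by
      rw [Finset.mul_sum, Finset.mul_sum, Finset.mul_sum, ← Finset.sum_sub_distrib]
      exact Finset.sum_congr rfl fun k hk => by ring
    rw [hexp] at h4
    have h6 : t * (∑ k ∈ s, b k * (ρ k - 1)) ≤ t * (t * (2 * ∑ k ∈ s, b k * (ρ k - 1)^2)) := by
      nlinarith
    exact le_of_mul_le_mul_left h6 ht0
  have hM : 0 ≤ 2 * ∑ k ∈ s, b k * (ρ k - 1)^2 := by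
    have : 0 ≤ ∑ k ∈ s, b k * (ρ k - 1)^2 :=
      Finset.sum_nonneg fun k hk => mul_nonneg (hb k hk).le (sq_nonneg _)
    linarith
  have := aux_small_t hM key
  have heq : ∑ k ∈ s, b k * (ρ k - 1) = ∑ k ∈ s, b k * ρ k - ∑ k ∈ s, b k := by
    rw [← Finset.sum_sub_distrib]; exact Finset.sum_congr rfl fun k hk => by ring
  rw [heq] at this
  linarith

/-- robustness of the approximation. When the Partial Allocation mechanism
uses `(1−ε)`-approximate Proportionally Fair allocations, every player still receives at least
`(1−ε)·(1 + b_i/B_{-i})^{-B_{-i}/b_i}` times her Proportionally Fair value. -/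
theorem stmt_11 {n m : ℕ} (hn : 2 ≤ n) (i : Fin n)
    (ε : ℝ) (hε0 : 0 ≤ ε) (hε1 : ε < 1)
    (v : Fin n → (Fin m → ℝ) → ℝ) (b : Fin n → ℝ)
    (hb : ∀ k, 1 ≤ b k)
    (hv_nonneg : ∀ k (y : Fin m → ℝ), (∀ j, 0 ≤ y j) → 0 ≤ v k y)
    (hv_hom : ∀ k (c : ℝ), 0 ≤ c → ∀ y : Fin m → ℝ, v k (c • y) = c * v k y)
    (hv_concave : ∀ k, ConcaveOn ℝ Set.univ (v k))
    (hvi_zero : v i 0 = 0)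
    -- the exact PF allocations
    (xstar : Fin n → Fin m → ℝ)
    (hxstar_nonneg : ∀ k j, 0 ≤ xstar k j) (hxstar_feas : ∀ j, ∑ k, xstar k j ≤ 1)
    (hxstar_max : ∀ x : Fin n → Fin m → ℝ,
      (∀ k j, 0 ≤ x k j) → (∀ j, ∑ k, x k j ≤ 1) →
      ∏ k, v k (x k) ^ b k ≤ ∏ k, v k (xstar k) ^ b k)
    (xmi : Fin n → Fin m → ℝ)
    (hxmi_nonneg : ∀ k j, 0 ≤ xmi k j) (hxmi_feas : ∀ j, ∑ k, xmi k j ≤ 1)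
    (hxmi_max : ∀ x : Fin n → Fin m → ℝ,
      (∀ k j, 0 ≤ x k j) → (∀ j, ∑ k, x k j ≤ 1) →
      ∏ k ∈ univ.erase i, v k (x k) ^ b k ≤ ∏ k ∈ univ.erase i, v k (xmi k) ^ b k)
    (hpos : ∀ k, 0 < v k (xstar k))
    (hpos' : ∀ k ∈ univ.erase i, 0 < v k (xmi k))
    -- the approximate PF allocations used by the adapted mechanism
    (xt : Fin n → Fin m → ℝ)
    (hxt_nonneg : ∀ k j, 0 ≤ xt k j) (hxt_feas : ∀ j, ∑ k, xt k j ≤ 1)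
    (hxt_approx : (1 - ε) * ∏ k, v k (xstar k) ^ b k ≤ ∏ k, v k (xt k) ^ b k)
    (xtmi : Fin n → Fin m → ℝ)
    (hxtmi_nonneg : ∀ k j, 0 ≤ xtmi k j) (hxtmi_feas : ∀ j, ∑ k, xtmi k j ≤ 1)
    (hxtmi_pos : 0 < ∏ k ∈ univ.erase i, v k (xtmi k) ^ b k) :
    (1 - ε) * ((1 + b i / ∑ k ∈ univ.erase i, b k)
        ^ (-((∑ k ∈ univ.erase i, b k) / b i))) * v i (xstar i)
      ≤ (min 1 (((∏ k ∈ univ.erase i, v k (xt k) ^ b k) /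
          (∏ k ∈ univ.erase i, v k (xtmi k) ^ b k)) ^ (1 / b i))) * v i (xt i) := by
  classical
  set B := ∑ k ∈ univ.erase i, b k with hBdef
  have hbi : (0:ℝ) < b i := lt_of_lt_of_le one_pos (hb i)
  have hne : (univ.erase i).Nonempty := by
    rw [← Finset.card_pos, Finset.card_erase_of_mem (mem_univ i), Finset.card_univ,
      Fintype.card_fin]
    omega
  have hBpos : 0 < B :=
    Finset.sum_pos (fun k _ => lt_of_lt_of_le one_pos (hb k)) hne
  have hbase_pos : (0:ℝ) < 1 + b i / B := by positivity
  set Pstar_mi := ∏ k ∈ univ.erase i, v k (xstar k) ^ b k with hPsmi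
  set Pmax := ∏ k ∈ univ.erase i, v k (xmi k) ^ b k with hPmax
  set Nt := ∏ k ∈ univ.erase i, v k (xt k) ^ b k with hNt
  set Dt := ∏ k ∈ univ.erase i, v k (xtmi k) ^ b k with hDt
  have hPsmi_pos : 0 < Pstar_mi :=
    Finset.prod_pos fun k _ => Real.rpow_pos_of_pos (hpos k) _
  have hPmax_pos : 0 < Pmax :=
    Finset.prod_pos fun k hk => Real.rpow_pos_of_pos (hpos' k hk) _
  have hNt_nonneg : 0 ≤ Nt :=
    Finset.prod_nonneg fun k _ =>
      Real.rpow_nonneg (hv_nonneg k _ (hxt_nonneg k)) _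
  have hNt_le : Nt ≤ Pmax := hxmi_max xt hxt_nonneg hxt_feas
  have hDt_le : Dt ≤ Pmax := hxmi_max xtmi hxtmi_nonneg hxtmi_feas
  have hX_nonneg : 0 ≤ v i (xt i) := hv_nonneg i _ (hxt_nonneg i)
  have hW_pos : 0 < v i (xstar i) := hpos i
  have h1e : (0:ℝ) < 1 - ε := by linarith
  -- KEY 1 : Pmax ≤ (1 + b i / B) ^ B * Pstar_mi
  have key1 : Pmax ≤ (1 + b i / B) ^ (B:ℝ) * Pstar_mi := by
    set y : Fin n → Fin m → ℝ := fun k => if k = i then 0 else xmi k with hy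
    have hy_nonneg : ∀ k j, 0 ≤ y k j := by
      intro k j; by_cases hk : k = i <;> simp [hy, hk, hxmi_nonneg k j]
    have hvy_nonneg : ∀ k, 0 ≤ v k (y k) := fun k => hv_nonneg k _ (hy_nonneg k)
    have hkkt : ∑ k, b k * (v k (y k) / v k (xstar k)) ≤ ∑ k, b k := by
      apply aux_kkt univ b (fun k => v k (xstar k)) (fun k => v k (y k))
        (fun k _ => lt_of_lt_of_le one_pos (hb k)) (fun k _ => hpos k)
        (fun k _ => hvy_nonneg k)
      intro t ht0 ht1
      set z : Fin n → Fin m → ℝ := fun k j' => (1-t) * xstar k j' + t * y k j' with hz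
      have hz_nonneg : ∀ k j', 0 ≤ z k j' := fun k j' =>
        add_nonneg (mul_nonneg (by linarith) (hxstar_nonneg k j'))
          (mul_nonneg ht0.le (hy_nonneg k j'))
      have hz_feas : ∀ j', ∑ k, z k j' ≤ 1 := by
        intro j'
        have hysum : ∑ k, y k j' ≤ 1 := by
          calc ∑ k, y k j' ≤ ∑ k, xmi k j' :=
                Finset.sum_le_sum fun k _ => by
                  by_cases hk : k = i
                  · simpa [hy, hk] using hxmi_nonneg i j'
                  · simp [hy, hk]
            _ ≤ 1 := hxmi_feas j'
        calc ∑ k, z k j' = (1-t) * ∑ k, xstar k j' + t * ∑ k, y k j' := by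
              rw [Finset.mul_sum, Finset.mul_sum, ← Finset.sum_add_distrib]
          _ ≤ (1-t) * 1 + t * 1 := by
              exact add_le_add (mul_le_mul_of_nonneg_left (hxstar_feas j') (by linarith))
                (mul_le_mul_of_nonneg_left hysum ht0.le)
          _ = 1 := by ring
      have hconc : ∀ k, (1-t) * v k (xstar k) + t * v k (y k) ≤ v k (z k) := by
        intro k
        have h := (hv_concave k).2 (Set.mem_univ (xstar k)) (Set.mem_univ (y k))
          (show (0:ℝ) ≤ 1 - t by linarith) ht0.le (by ring)
        have hzk : z k = (1-t) • xstar k + t • y k := by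
          funext j'; simp [hz, Pi.add_apply, Pi.smul_apply, smul_eq_mul]
        rw [hzk]; simpa [smul_eq_mul] using h
      calc ∏ k, ((1-t) * v k (xstar k) + t * v k (y k)) ^ b k
          ≤ ∏ k, v k (z k) ^ b k := by
            apply Finset.prod_le_prod
            · intro k _
              exact Real.rpow_nonneg
                (add_nonneg (mul_nonneg (by linarith) (hpos k).le)
                  (mul_nonneg ht0.le (hvy_nonneg k))) _
            · intro k _
              exact Real.rpow_le_rpow
                (add_nonneg (mul_nonneg (by linarith) (hpos k).le)
                  (mul_nonneg ht0.le (hvy_nonneg k)))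
                (hconc k) (le_trans zero_le_one (hb k))
        _ ≤ _ := hxstar_max z hz_nonneg hz_feas
    have hyi : v i (y i) = 0 := by simp [hy, hvi_zero]
    have hsum_erase : ∑ k ∈ univ.erase i, b k * (v k (xmi k) / v k (xstar k)) ≤ B + b i := by
      have hsplit := Finset.add_sum_erase univ
        (fun k => b k * (v k (y k) / v k (xstar k))) (mem_univ i)
      have hBsplit := Finset.add_sum_erase univ b (mem_univ i)
      have hye : ∀ k ∈ univ.erase i,
          b k * (v k (y k) / v k (xstar k)) = b k * (v k (xmi k) / v k (xstar k)) := by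
        intro k hk
        have hki : k ≠ i := Finset.ne_of_mem_erase hk
        simp [hy, hki]
      rw [Finset.sum_congr rfl hye] at hsplit
      simp only [hyi, zero_div, mul_zero, zero_add] at hsplit
      rw [hsplit]
      linarith [hkkt, hBsplit, hBdef.le, hBdef.ge]
    -- AM-GM
    set r : Fin n → ℝ := fun k => v k (xmi k) / v k (xstar k) with hr
    have hr_nonneg : ∀ k ∈ univ.erase i, 0 ≤ r k := fun k hk =>
      div_nonneg (hpos' k hk).le (hpos k).le
    have hgm := Real.geom_mean_le_arith_mean_weighted (univ.erase i)
      (fun k => b k / B) r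
      (fun k _ => div_nonneg (le_trans zero_le_one (hb k)) hBpos.le)
      (by rw [← Finset.sum_div, ← hBdef, div_self hBpos.ne'])
      hr_nonneg
    have harith : ∑ k ∈ univ.erase i, (b k / B) * r k ≤ 1 + b i / B := by
      have he : ∑ k ∈ univ.erase i, (b k / B) * r k
          = (∑ k ∈ univ.erase i, b k * r k) / B := by
        rw [Finset.sum_div]
        exact Finset.sum_congr rfl fun k _ => by ring
      rw [he, div_le_iff₀ hBpos]
      have h2 : (1 + b i / B) * B = B + b i := by field_simp
      rw [h2]
      exact hsum_erase
    have hprod1 : ∏ k ∈ univ.erase i, r k ^ (b k / B) ≤ 1 + b i / B :=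
      hgm.trans harith
    have hpow := Real.rpow_le_rpow
      (Finset.prod_nonneg fun k hk => Real.rpow_nonneg (hr_nonneg k hk) _)
      hprod1 hBpos.le
    have hLHSeq : (∏ k ∈ univ.erase i, r k ^ (b k / B)) ^ (B:ℝ)
        = ∏ k ∈ univ.erase i, r k ^ b k := by
      rw [← Real.finset_prod_rpow _ _ (fun k hk => Real.rpow_nonneg (hr_nonneg k hk) _) _]
      exact Finset.prod_congr rfl fun k hk => by
        rw [← Real.rpow_mul (hr_nonneg k hk), div_mul_cancel₀ _ hBpos.ne']
    rw [hLHSeq] at hpow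
    have hratio : ∏ k ∈ univ.erase i, r k ^ b k = Pmax / Pstar_mi := by
      rw [hPmax, hPsmi, ← Finset.prod_div_distrib]
      exact Finset.prod_congr rfl fun k hk =>
        Real.div_rpow (hpos' k hk).le (hpos k).le _
    rw [hratio, div_le_iff₀ hPsmi_pos] at hpow
    exact hpow
  -- assemble
  have hPt : ∏ k, v k (xt k) ^ b k = v i (xt i) ^ b i * Nt :=
    (Finset.mul_prod_erase univ (fun k => v k (xt k) ^ b k) (mem_univ i)).symm
  have hPs : ∏ k, v k (xstar k) ^ b k = v i (xstar i) ^ b i * Pstar_mi :=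
    (Finset.mul_prod_erase univ (fun k => v k (xstar k) ^ b k) (mem_univ i)).symm
  have happrox : (1 - ε) * (v i (xstar i) ^ b i * Pstar_mi) ≤ v i (xt i) ^ b i * Nt := by
    rw [← hPt, ← hPs]; exact hxt_approx
  have hDt_pos : 0 < Dt := hxtmi_pos
  have hq'_nonneg : 0 ≤ (Nt / Dt) ^ (1 / b i) :=
    Real.rpow_nonneg (div_nonneg hNt_nonneg hDt_pos.le) _
  have hmin_pow : Nt / Pmax ≤ (min 1 ((Nt / Dt) ^ (1 / b i))) ^ b i := by
    rcases le_total ((Nt / Dt) ^ (1 / b i)) 1 with h | h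
    · rw [min_eq_right h]
      have heq : ((Nt / Dt) ^ (1 / b i)) ^ b i = Nt / Dt := by
        rw [← Real.rpow_mul (div_nonneg hNt_nonneg hDt_pos.le), one_div,
          inv_mul_cancel₀ hbi.ne', Real.rpow_one]
      rw [heq]
      exact div_le_div_of_nonneg_left hNt_nonneg hDt_pos hDt_le
    · rw [min_eq_left h, Real.one_rpow]
      exact div_le_one_of_le₀ hNt_le hPmax_pos.le
  -- final comparison via b i-th powers
  have hC : ((1 + b i / B) ^ (-(B / b i))) ^ b i = (1 + b i / B) ^ (-B : ℝ) := by
    rw [← Real.rpow_mul hbase_pos.le]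
    congr 1
    field_simp
  have hL_nonneg : 0 ≤ (1 - ε) * ((1 + b i / B) ^ (-(B / b i))) * v i (xstar i) := by
    have := Real.rpow_nonneg hbase_pos.le (-(B / b i))
    positivity
  have hR_nonneg : 0 ≤ min 1 ((Nt / Dt) ^ (1 / b i)) * v i (xt i) :=
    mul_nonneg (le_min zero_le_one hq'_nonneg) hX_nonneg
  rw [← Real.rpow_le_rpow_iff hL_nonneg hR_nonneg hbi]
  have hCpos : (0:ℝ) < (1 + b i / B) ^ (-(B / b i)) := Real.rpow_pos_of_pos hbase_pos _
  have hLpow : ((1 - ε) * ((1 + b i / B) ^ (-(B / b i))) * v i (xstar i)) ^ b i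
      ≤ (1 - ε) * (1 + b i / B) ^ (-B : ℝ) * v i (xstar i) ^ b i := by
    rw [Real.mul_rpow (by positivity) hW_pos.le, Real.mul_rpow h1e.le hCpos.le, hC]
    have h1 : (1 - ε) ^ b i ≤ 1 - ε := by
      calc (1 - ε) ^ b i ≤ (1 - ε) ^ (1:ℝ) :=
            Real.rpow_le_rpow_of_exponent_ge h1e (by linarith) (hb i)
        _ = 1 - ε := Real.rpow_one _
    have hnn : (0:ℝ) ≤ (1 + b i / B) ^ (-B : ℝ) * v i (xstar i) ^ b i := by
      have := Real.rpow_pos_of_pos hbase_pos (-B : ℝ)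
      positivity
    calc (1 - ε) ^ b i * (1 + b i / B) ^ (-B : ℝ) * v i (xstar i) ^ b i
        = (1 - ε) ^ b i * ((1 + b i / B) ^ (-B : ℝ) * v i (xstar i) ^ b i) := by ring
      _ ≤ (1 - ε) * ((1 + b i / B) ^ (-B : ℝ) * v i (xstar i) ^ b i) :=
          mul_le_mul_of_nonneg_right h1 hnn
      _ = (1 - ε) * (1 + b i / B) ^ (-B : ℝ) * v i (xstar i) ^ b i := by ring
  have step1 : (1 - ε) * (1 + b i / B) ^ (-B : ℝ) * v i (xstar i) ^ b i
      ≤ (Nt * v i (xt i) ^ b i) / Pmax := by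
    have hden_pos : (0:ℝ) < (1 + b i / B) ^ (B:ℝ) * Pstar_mi := by
      have := Real.rpow_pos_of_pos hbase_pos (B:ℝ)
      positivity
    have h2 : (1 - ε) * (v i (xstar i) ^ b i * Pstar_mi) / ((1 + b i / B) ^ (B:ℝ) * Pstar_mi)
        ≤ (v i (xt i) ^ b i * Nt) / Pmax := by
      apply div_le_div₀ (by positivity) happrox hPmax_pos key1
    have h3 : (1 - ε) * (v i (xstar i) ^ b i * Pstar_mi) / ((1 + b i / B) ^ (B:ℝ) * Pstar_mi)
        = (1 - ε) * (1 + b i / B) ^ (-B : ℝ) * v i (xstar i) ^ b i := by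
      rw [Real.rpow_neg hbase_pos.le]
      have hBne : ((1 + b i / B) ^ (B:ℝ)) ≠ 0 := (Real.rpow_pos_of_pos hbase_pos _).ne'
      field_simp
    rw [h3] at h2
    calc (1 - ε) * (1 + b i / B) ^ (-B : ℝ) * v i (xstar i) ^ b i
        ≤ (v i (xt i) ^ b i * Nt) / Pmax := h2
      _ = (Nt * v i (xt i) ^ b i) / Pmax := by ring
  have step2 : (Nt * v i (xt i) ^ b i) / Pmax
      ≤ (min 1 ((Nt / Dt) ^ (1 / b i))) ^ b i * v i (xt i) ^ b i := by
    have h := mul_le_mul_of_nonneg_right hmin_pow (Real.rpow_nonneg hX_nonneg (b i))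
    calc (Nt * v i (xt i) ^ b i) / Pmax = (Nt / Pmax) * v i (xt i) ^ b i := by ring
      _ ≤ _ := h
  have hRpow : (min 1 ((Nt / Dt) ^ (1 / b i)) * v i (xt i)) ^ b i
      = (min 1 ((Nt / Dt) ^ (1 / b i))) ^ b i * v i (xt i) ^ b i :=
    Real.mul_rpow (le_min zero_le_one hq'_nonneg) hX_nonneg
  rw [hRpow]
  exact hLpow.trans (step1.trans step2)
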